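/- Let A be a nonnegative real n×n matrix with n ≥ 1. Then the spectral radius ρ(A) is an eigenvalue of A associated with a nonnegative eigenvector: there exists x ∈ ℝ^n with x ≥ 0, x ≠ 0, and A·x = ρ(A)·x. -/

import Mathlib

open Matrix Polynomial

/-- The spectral radius of a real square matrix: the maximum modulus of the complex roots
of its characteristic polynomial. -/
noncomputable def specRad {n : ℕ} (A : Matrix (Fin n) (Fin n) ℝ) : ℝ :=
  sSup {r : ℝ | ∃ μ : ℂ,
    μ ∈ (A.map (Complex.ofReal : ℝ → ℂ)).charpoly.roots ∧ ‖μ‖ = r}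

section PFAux

open Filter Topology

attribute [local instance] Matrix.linftyOpNormedRing Matrix.linftyOpNormedAlgebra

variable {n : ℕ}

/-- eval of charpoly is det of `μ • 1 - M`. -/
lemma pf_eval_charpoly (M : Matrix (Fin n) (Fin n) ℂ) (μ : ℂ) :
    M.charpoly.eval μ = (μ • (1 : Matrix (Fin n) (Fin n) ℂ) - M).det := by
  have : M.charpoly.eval μ = (Polynomial.evalRingHom μ) M.charpoly := rfl
  rw [this, Matrix.charpoly, RingHom.map_det]
  congr 1
  ext i j
  rcases eq_or_ne i j with rfl | h
  · simp [Matrix.charmatrix_apply_eq, Matrix.smul_apply, Matrix.one_apply]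
  · simp [Matrix.charmatrix_apply_ne _ _ _ h, Matrix.smul_apply, Matrix.one_apply, h]

lemma pf_mem_roots_iff (M : Matrix (Fin n) (Fin n) ℂ) (μ : ℂ) :
    μ ∈ M.charpoly.roots ↔ ¬ IsUnit (μ • (1 : Matrix (Fin n) (Fin n) ℂ) - M) := by
  rw [Polynomial.mem_roots (M.charpoly_monic.ne_zero), Matrix.isUnit_iff_isUnit_det,
    isUnit_iff_ne_zero, Polynomial.IsRoot.def, pf_eval_charpoly]
  simp [M.charpoly_monic.ne_zero]


lemma pf_specRad_spec (hn : 1 ≤ n) (A : Matrix (Fin n) (Fin n) ℝ) :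
    (∃ μ ∈ (A.map (Complex.ofReal : ℝ → ℂ)).charpoly.roots, ‖μ‖ = specRad A) ∧
      (∀ μ ∈ (A.map (Complex.ofReal : ℝ → ℂ)).charpoly.roots, ‖μ‖ ≤ specRad A) := by
  set B := A.map (Complex.ofReal : ℝ → ℂ) with hB
  have hfin : {r : ℝ | ∃ μ : ℂ, μ ∈ B.charpoly.roots ∧ ‖μ‖ = r}.Finite := by
    have : {r : ℝ | ∃ μ : ℂ, μ ∈ B.charpoly.roots ∧ ‖μ‖ = r}
        = (fun μ : ℂ => ‖μ‖) '' {μ : ℂ | μ ∈ B.charpoly.roots} := by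
      ext r; simp [Set.mem_image]
    rw [this]
    exact (B.charpoly.roots.finite_toSet).image _
  have hcard : Multiset.card B.charpoly.roots = n := by
    have hsp : B.charpoly.Splits := IsAlgClosed.splits _
    have := (Polynomial.splits_iff_card_roots).mp hsp
    rwa [Matrix.charpoly_natDegree_eq_dim, Fintype.card_fin] at this
  have hne : ∃ μ : ℂ, μ ∈ B.charpoly.roots := by
    have : B.charpoly.roots ≠ 0 := by
      intro h
      rw [h] at hcard
      simp at hcard
      omega
    exact Multiset.exists_mem_of_ne_zero this
  obtain ⟨μ, hμ⟩ := hne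
  have hSne : {r : ℝ | ∃ μ : ℂ, μ ∈ B.charpoly.roots ∧ ‖μ‖ = r}.Nonempty :=
    ⟨‖μ‖, μ, hμ, rfl⟩
  constructor
  · obtain ⟨ν, hν, hr⟩ := hSne.csSup_mem hfin
    exact ⟨ν, hν, hr⟩
  · intro ν hν
    exact le_csSup hfin.bddAbove ⟨ν, hν, rfl⟩


-- assume: hub : every root modulus ≤ ρ ; hρ : 0 ≤ ρ ; hts : ρ < t
lemma pf_summable (A : Matrix (Fin n) (Fin n) ℝ)
    (hub : ∀ μ ∈ (A.map (Complex.ofReal : ℝ → ℂ)).charpoly.roots, ‖μ‖ ≤ specRad A)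
    (hρ : 0 ≤ specRad A) {t : ℝ} (hts : specRad A < t) :
    Summable (fun k : ℕ => ‖(A.map (Complex.ofReal : ℝ → ℂ)) ^ k‖ * t⁻¹ ^ (k + 1)) := by
  letI : CompleteSpace (Matrix (Fin n) (Fin n) ℂ) := FiniteDimensional.complete ℂ _
  set ρ := specRad A
  set B := A.map (Complex.ofReal : ℝ → ℂ) with hBdef
  have hsr : spectralRadius ℂ B ≤ ENNReal.ofReal ρ := by
    rw [spectralRadius]
    refine iSup₂_le fun μ hμ => ?_
    rw [spectrum.mem_iff, Algebra.algebraMap_eq_smul_one] at hμ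
    have hroot : μ ∈ B.charpoly.roots := by
      rw [Polynomial.mem_roots B.charpoly_monic.ne_zero, Polynomial.IsRoot.def]
      by_contra hne
      exact hμ (by
        rw [Matrix.isUnit_iff_isUnit_det, isUnit_iff_ne_zero]
        intro hdet
        apply hne
        have : B.charpoly.eval μ = (μ • (1 : Matrix (Fin n) (Fin n) ℂ) - B).det := by
          have : B.charpoly.eval μ = (Polynomial.evalRingHom μ) B.charpoly := rfl
          rw [this, Matrix.charpoly, RingHom.map_det]
          congr 1
          ext i j
          rcases eq_or_ne i j with rfl | h
          · simp [Matrix.charmatrix_apply_eq, Matrix.smul_apply, Matrix.one_apply]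
          · simp [Matrix.charmatrix_apply_ne _ _ _ h, Matrix.smul_apply, Matrix.one_apply, h]
        rw [this, hdet])
    have : ‖μ‖ ≤ ρ := hub μ hroot
    calc (‖μ‖₊ : ENNReal) = ENNReal.ofReal (‖μ‖) := by
          rw [ofReal_norm, enorm_eq_nnnorm]
      _ ≤ ENNReal.ofReal ρ := ENNReal.ofReal_le_ofReal this
  set s := (ρ + t) / 2 with hs
  have hρs : ρ < s := by simp [hs]; linarith
  have hst : s < t := by simp [hs]; linarith
  have hs0 : 0 < s := by linarith
  have hlim : limsup (fun k : ℕ => (‖B ^ k‖₊ : ENNReal) ^ (1 / (k : ℝ))) atTop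
      < ENNReal.ofReal s := by
    refine lt_of_le_of_lt ((spectrum.limsup_pow_nnnorm_pow_one_div_le_spectralRadius B).trans hsr) ?_
    exact ENNReal.ofReal_lt_ofReal_iff_of_nonneg hρ |>.mpr hρs
  have hev : ∀ᶠ k : ℕ in atTop, (‖B ^ k‖₊ : ENNReal) ^ (1 / (k : ℝ)) < ENNReal.ofReal s :=
    Filter.eventually_lt_of_limsup_lt hlim
  have hev2 : ∀ᶠ k : ℕ in atTop, ‖B ^ k‖ ≤ s ^ k := by
    filter_upwards [hev, Filter.eventually_ge_atTop 1] with k hk hk1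
    have hkne : (k : ℝ) ≠ 0 := by
      simpa using Nat.one_le_iff_ne_zero.mp hk1
    have h1 : ((‖B ^ k‖₊ : ENNReal) ^ (1 / (k:ℝ))) ^ (k:ℝ) ≤ (ENNReal.ofReal s) ^ (k:ℝ) :=
      ENNReal.rpow_le_rpow hk.le (by positivity)
    rw [← ENNReal.rpow_mul, one_div, inv_mul_cancel₀ hkne, ENNReal.rpow_one,
      ENNReal.rpow_natCast] at h1
    have h2 : (‖B ^ k‖₊ : ENNReal) ≤ ENNReal.ofReal (s ^ k) := by
      rwa [ENNReal.ofReal_pow hs0.le]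
    rw [← enorm_eq_nnnorm, ← ofReal_norm] at h2
    exact (ENNReal.ofReal_le_ofReal_iff (by positivity)).mp h2
  have ht0 : 0 < t := lt_of_le_of_lt hρ hts
  refine Summable.of_norm_bounded_eventually_nat (g := fun k => t⁻¹ * (s / t) ^ k) ?_ ?_
  · exact (summable_geometric_of_lt_one (by positivity) ((div_lt_one ht0).mpr hst)).mul_left t⁻¹
  · filter_upwards [hev2] with k hk
    have hBk : 0 ≤ ‖B ^ k‖ := norm_nonneg _
    have heq : t⁻¹ * (s / t) ^ k = s ^ k * t⁻¹ ^ (k + 1) := by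
      rw [div_eq_mul_inv, mul_pow, pow_succ]
      ring
    rw [Real.norm_eq_abs, abs_of_nonneg (by positivity), heq]
    exact mul_le_mul_of_nonneg_right hk (by positivity)


-- hypotheses: summability of the norm series, |z| = t, 0 ≤ ρ < t
lemma pf_resolvent (B : Matrix (Fin n) (Fin n) ℂ) {t : ℝ} (ht0 : 0 < t) {z : ℂ}
    (habs : ‖z‖ = t)
    (hsum : Summable (fun k : ℕ => ‖B ^ k‖ * t⁻¹ ^ (k + 1))) :
    ∃ V : Matrix (Fin n) (Fin n) ℂ,
      HasSum (fun k : ℕ => z⁻¹ ^ (k + 1) • B ^ k) V ∧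
      (z • (1 : Matrix (Fin n) (Fin n) ℂ) - B) * V = 1 ∧
      V * (z • (1 : Matrix (Fin n) (Fin n) ℂ) - B) = 1 := by
  letI : CompleteSpace (Matrix (Fin n) (Fin n) ℂ) := FiniteDimensional.complete ℂ _
  have hz0 : z ≠ 0 := by
    intro h; rw [h] at habs; simp at habs; exact (ht0.ne' habs.symm)
  set f : ℕ → Matrix (Fin n) (Fin n) ℂ := fun k => z⁻¹ ^ (k + 1) • B ^ k with hf
  have hnorm : ∀ k, ‖f k‖ = ‖B ^ k‖ * t⁻¹ ^ (k + 1) := by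
    intro k
    rw [hf]
    simp only [norm_smul, norm_pow, norm_inv, habs]
    ring
  have hfs : Summable f := by
    refine Summable.of_norm ?_
    simpa only [hnorm] using hsum
  obtain ⟨V, hV⟩ := hfs
  have hshift : HasSum (fun k => f (k + 1)) (V - f 0) := by
    refine (hasSum_nat_add_iff 1).mpr ?_
    simpa using hV
  have hzz : ∀ k : ℕ, z * z⁻¹ ^ (k + 2) = z⁻¹ ^ (k + 1) := by
    intro k
    have h1 : z * z⁻¹ ^ (k + 2) = (z * z⁻¹) * z⁻¹ ^ (k + 1) := by ring
    rw [h1, mul_inv_cancel₀ hz0, one_mul]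
  have hBf : ∀ k, B * f k = z • f (k + 1) := by
    intro k
    rw [hf]
    simp only [mul_smul_comm, smul_smul, hzz]
    rw [← pow_succ']
  have hfB : ∀ k, f k * B = z • f (k + 1) := by
    intro k
    rw [hf]
    simp only [smul_mul_assoc, smul_smul, hzz]
    rw [← pow_succ]
  have hf0 : f 0 = z⁻¹ • (1 : Matrix (Fin n) (Fin n) ℂ) := by simp [hf]
  have hBV : B * V = z • V - 1 := by
    have h3 : HasSum (fun k => B * f k) (B * V) := hV.mul_left B
    have h4 : HasSum (fun k => z • f (k + 1)) (z • (V - f 0)) := hshift.const_smul z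
    have heq : B * V = z • (V - f 0) := by
      refine h3.unique ?_
      simpa only [← hBf] using h4
    rw [heq, hf0, smul_sub, smul_smul, mul_inv_cancel₀ hz0, one_smul]
  have hVB : V * B = z • V - 1 := by
    have h3 : HasSum (fun k => f k * B) (V * B) := hV.mul_right B
    have h4 : HasSum (fun k => z • f (k + 1)) (z • (V - f 0)) := hshift.const_smul z
    have heq : V * B = z • (V - f 0) := by
      refine h3.unique ?_
      simpa only [← hfB] using h4
    rw [heq, hf0, smul_sub, smul_smul, mul_inv_cancel₀ hz0, one_smul]
  refine ⟨V, hV, ?_, ?_⟩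
  · rw [sub_mul, smul_mul_assoc, one_mul, hBV]
    abel
  · rw [mul_sub, mul_smul_comm, mul_one, hVB]
    abel


lemma pf_norm_lb (B V : Matrix (Fin n) (Fin n) ℂ) {z μ : ℂ}
    (hl : (z • (1 : Matrix (Fin n) (Fin n) ℂ) - B) * V = 1)
    (hr : V * (z • (1 : Matrix (Fin n) (Fin n) ℂ) - B) = 1)
    (hμ : ¬ IsUnit (μ • (1 : Matrix (Fin n) (Fin n) ℂ) - B)) :
    1 ≤ ‖z - μ‖ * ‖V‖ := by
  by_contra hcon
  push_neg at hcon
  have h1 : ‖(z - μ) • V‖ < 1 := by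
    rw [norm_smul]
    exact hcon
  set U : (Matrix (Fin n) (Fin n) ℂ)ˣ := ⟨z • 1 - B, V, hl, hr⟩ with hU
  set w := Units.oneSub ((z - μ) • V) h1 with hw
  apply hμ
  have : ((U * w : (Matrix (Fin n) (Fin n) ℂ)ˣ) : Matrix (Fin n) (Fin n) ℂ)
      = μ • (1 : Matrix (Fin n) (Fin n) ℂ) - B := by
    have hval : ((U * w : (Matrix (Fin n) (Fin n) ℂ)ˣ) : Matrix (Fin n) (Fin n) ℂ)
        = (z • 1 - B) * (1 - (z - μ) • V) := rfl
    rw [hval, mul_sub, mul_one, mul_smul_comm, hl]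
    rw [sub_smul, sub_sub]
    module
  exact this ▸ (U * w).isUnit


noncomputable def pf_entryCLM (i j : Fin n) : Matrix (Fin n) (Fin n) ℂ →L[ℂ] ℂ :=
  LinearMap.toContinuousLinearMap
    { toFun := fun M => M i j
      map_add' := fun _ _ => rfl
      map_smul' := fun _ _ => rfl }

@[simp] lemma pf_entryCLM_apply (i j : Fin n) (M : Matrix (Fin n) (Fin n) ℂ) :
    pf_entryCLM i j M = M i j := rfl


lemma pf_pow_nonneg (A : Matrix (Fin n) (Fin n) ℝ) (hA : ∀ i j, 0 ≤ A i j) (k : ℕ) :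
    ∀ i j, 0 ≤ (A ^ k) i j := by
  induction k with
  | zero => intro i j; by_cases h : i = j <;> simp [Matrix.one_apply, h]
  | succ k ih =>
    intro i j
    rw [pow_succ, Matrix.mul_apply]
    exact Finset.sum_nonneg fun l _ => mul_nonneg (ih i l) (hA l j)

lemma pf_pow_map (A : Matrix (Fin n) (Fin n) ℝ) (k : ℕ) :
    (A.map (Complex.ofReal : ℝ → ℂ)) ^ k = (A ^ k).map (Complex.ofReal : ℝ → ℂ) := by
  have h1 : A.map (Complex.ofReal : ℝ → ℂ) = Complex.ofRealHom.mapMatrix A := rfl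
  rw [h1, ← map_pow]
  rfl


lemma pf_opNorm_le (M : Matrix (Fin n) (Fin n) ℂ) {c : ℝ} (hc : 0 ≤ c)
    (h : ∀ i, ∑ j, ‖M i j‖ ≤ c) : ‖M‖ ≤ c := by
  rw [Matrix.linfty_opNorm_def]
  have h2 : (Finset.univ.sup fun i : Fin n => ∑ j, ‖M i j‖₊) ≤ c.toNNReal := by
    refine Finset.sup_le fun i _ => ?_
    have : ((∑ j, ‖M i j‖₊ : NNReal) : ℝ) = ∑ j, ‖M i j‖ := by
      push_cast; rfl
    rw [← NNReal.coe_le_coe, this, Real.coe_toNNReal _ hc]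
    exact h i
  calc ((Finset.univ.sup fun i : Fin n => ∑ j, ‖M i j‖₊ : NNReal) : ℝ)
      ≤ (c.toNNReal : ℝ) := NNReal.coe_le_coe.mpr h2
    _ = c := Real.coe_toNNReal _ hc

lemma pf_real_resolvent (A : Matrix (Fin n) (Fin n) ℝ) (hA : ∀ i j, 0 ≤ A i j)
    {t : ℝ} (ht0 : 0 < t)
    (hsum : Summable fun k : ℕ => ‖(A.map (Complex.ofReal : ℝ → ℂ)) ^ k‖ * t⁻¹ ^ (k + 1)) :
    ∃ P : Matrix (Fin n) (Fin n) ℝ, (∀ i j, 0 ≤ P i j) ∧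
      (t • (1 : Matrix (Fin n) (Fin n) ℝ) - A) * P = 1 ∧
      ∀ z : ℂ, ‖z‖ = t →
        ∀ V : Matrix (Fin n) (Fin n) ℂ,
          HasSum (fun k : ℕ => z⁻¹ ^ (k + 1) • (A.map (Complex.ofReal : ℝ → ℂ)) ^ k) V →
          ‖V‖ ≤ ∑ i, ∑ j, P i j := by
  letI : CompleteSpace (Matrix (Fin n) (Fin n) ℂ) := FiniteDimensional.complete ℂ _
  set B := A.map (Complex.ofReal : ℝ → ℂ) with hB
  -- entrywise HasSum for a general z
  have hE : ∀ (z : ℂ) (V : Matrix (Fin n) (Fin n) ℂ),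
      HasSum (fun k : ℕ => z⁻¹ ^ (k + 1) • B ^ k) V → ∀ i j,
      HasSum (fun k : ℕ => z⁻¹ ^ (k + 1) * (((A ^ k) i j : ℝ) : ℂ)) (V i j) := by
    intro z V hV i j
    have hterm0 : ∀ k : ℕ, (z⁻¹ ^ (k + 1) • B ^ k) i j
        = z⁻¹ ^ (k + 1) * (((A ^ k) i j : ℝ) : ℂ) := by
      intro k
      rw [Matrix.smul_apply, smul_eq_mul, hB, pf_pow_map, Matrix.map_apply]
    have h0 := hV.mapL (pf_entryCLM i j)
    simp only [pf_entryCLM_apply] at h0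
    simpa only [hterm0] using h0
  -- the resolvent at the real point t
  have habs_t : ‖((t : ℝ) : ℂ)‖ = t := by
    rw [Complex.norm_real, Real.norm_eq_abs, abs_of_pos ht0]
  obtain ⟨W, hW, hlW, hrW⟩ := pf_resolvent B ht0 habs_t hsum
  set P : Matrix (Fin n) (Fin n) ℝ := Matrix.of fun i j => (W i j).re with hP
  -- real entry sums
  have hterm : ∀ k i j, (((t : ℝ) : ℂ))⁻¹ ^ (k + 1) * (((A ^ k) i j : ℝ) : ℂ)
      = ((t⁻¹ ^ (k + 1) * (A ^ k) i j : ℝ) : ℂ) := by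
    intro k i j
    push_cast
    ring
  have h1' : ∀ i j, HasSum
      (fun k : ℕ => ((t⁻¹ ^ (k + 1) * (A ^ k) i j : ℝ) : ℂ)) (W i j) := by
    intro i j
    have h1 := (hE _ W hW i j)
    have heq : (fun k : ℕ => ((t : ℂ))⁻¹ ^ (k + 1) * (((A ^ k) i j : ℝ) : ℂ))
        = fun k : ℕ => ((t⁻¹ ^ (k + 1) * (A ^ k) i j : ℝ) : ℂ) :=
      funext fun k => hterm k i j
    rwa [heq] at h1
  have hPsum : ∀ i j, HasSum (fun k : ℕ => t⁻¹ ^ (k + 1) * (A ^ k) i j) (P i j) := by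
    intro i j
    have h2 := (h1' i j).mapL Complex.reCLM
    simpa only [Complex.reCLM_apply, Complex.ofReal_re, hP, Matrix.of_apply] using h2
  have him : ∀ i j, (W i j).im = 0 := by
    intro i j
    have h2 := (h1' i j).mapL Complex.imCLM
    have h3 : HasSum (fun k : ℕ => (0 : ℝ)) ((W i j).im) := by
      simpa only [Complex.imCLM_apply, Complex.ofReal_im] using h2
    exact h3.unique hasSum_zero
  have hWP : W = P.map (Complex.ofReal : ℝ → ℂ) := by
    ext i j
    have : P.map (Complex.ofReal : ℝ → ℂ) i j = (((W i j).re : ℝ) : ℂ) := rfl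
    rw [this]
    exact Complex.ext (by simp) (by simp [him i j])
  have hPnn : ∀ i j, 0 ≤ P i j := by
    intro i j
    refine hasSum_le (fun k => ?_) hasSum_zero (hPsum i j)
    exact mul_nonneg (by positivity) (pf_pow_nonneg A hA k i j)
  refine ⟨P, hPnn, ?_, ?_⟩
  · -- real inverse identity
    have hmap1 : (t • (1 : Matrix (Fin n) (Fin n) ℝ) - A).map (Complex.ofReal : ℝ → ℂ)
        = ((t : ℝ) : ℂ) • (1 : Matrix (Fin n) (Fin n) ℂ) - B := by
      ext i j
      rcases eq_or_ne i j with rfl | h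
      · simp [Matrix.map_apply, Matrix.one_apply, hB]
      · simp [Matrix.map_apply, Matrix.one_apply, h, hB]
    have hmul : ((t • (1 : Matrix (Fin n) (Fin n) ℝ) - A) * P).map (Complex.ofReal : ℝ → ℂ)
        = 1 := by
      have hmm : ∀ X Y : Matrix (Fin n) (Fin n) ℝ,
          (X * Y).map (Complex.ofReal : ℝ → ℂ)
            = X.map (Complex.ofReal : ℝ → ℂ) * Y.map (Complex.ofReal : ℝ → ℂ) :=
        fun X Y => Matrix.map_mul (f := Complex.ofRealHom)
      rw [hmm, hmap1, ← hWP, hlW]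
    ext i j
    have := congrFun (congrFun hmul i) j
    rcases eq_or_ne i j with rfl | h
    · simpa [Matrix.map_apply, Matrix.one_apply] using this
    · simpa [Matrix.map_apply, Matrix.one_apply, h] using this
  · -- norm bound
    intro z habs V hV
    have hcnn : (0 : ℝ) ≤ ∑ i, ∑ j, P i j :=
      Finset.sum_nonneg fun i _ => Finset.sum_nonneg fun j _ => hPnn i j
    refine pf_opNorm_le V hcnn fun i => ?_
    have hz0 : ‖z‖ = t := habs
    have hentry : ∀ j, ‖V i j‖ ≤ P i j := by
      intro j
      have h1 := hE z V hV i j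
      have hnorm_eq : ∀ k : ℕ, ‖z⁻¹ ^ (k + 1) * (((A ^ k) i j : ℝ) : ℂ)‖
          = t⁻¹ ^ (k + 1) * (A ^ k) i j := by
        intro k
        rw [norm_mul, norm_pow, norm_inv, hz0, Complex.norm_real,
          Real.norm_eq_abs, abs_of_nonneg (pf_pow_nonneg A hA k i j)]
      have hsumm : Summable fun k : ℕ => ‖z⁻¹ ^ (k + 1) * (((A ^ k) i j : ℝ) : ℂ)‖ := by
        simpa only [hnorm_eq] using (hPsum i j).summable
      calc ‖V i j‖ = ‖∑' k : ℕ, z⁻¹ ^ (k + 1) * (((A ^ k) i j : ℝ) : ℂ)‖ := by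
            rw [h1.tsum_eq]
        _ ≤ ∑' k : ℕ, ‖z⁻¹ ^ (k + 1) * (((A ^ k) i j : ℝ) : ℂ)‖ := norm_tsum_le_tsum_norm hsumm
        _ = ∑' k : ℕ, t⁻¹ ^ (k + 1) * (A ^ k) i j := by
            exact tsum_congr fun k => hnorm_eq k
        _ = P i j := (hPsum i j).tsum_eq
    calc ∑ j, ‖V i j‖ ≤ ∑ j, P i j := Finset.sum_le_sum fun j _ => hentry j
      _ ≤ ∑ i', ∑ j, P i' j := by
          refine Finset.single_le_sum (f := fun i' => ∑ j, P i' j) (fun i' _ => ?_) (Finset.mem_univ i)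
          exact Finset.sum_nonneg fun j _ => hPnn i' j


lemma pf_key (A : Matrix (Fin n) (Fin n) ℝ) (hA : ∀ i j, 0 ≤ A i j)
    (hub : ∀ μ ∈ (A.map (Complex.ofReal : ℝ → ℂ)).charpoly.roots, ‖μ‖ ≤ specRad A)
    (hρ0 : 0 ≤ specRad A) {μ₀ : ℂ} (habs0 : ‖μ₀‖ = specRad A)
    (hμ₀nu : ¬ IsUnit (μ₀ • (1 : Matrix (Fin n) (Fin n) ℂ) - A.map (Complex.ofReal : ℝ → ℂ)))
    (m : ℕ) :
    ∃ x : Fin n → ℝ, (∀ i, 0 ≤ x i) ∧ (∑ i, x i) = 1 ∧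
      ∃ c : ℝ, 0 ≤ c ∧ c ≤ ((m : ℝ) + 1)⁻¹ ∧
        A.mulVec x = (specRad A + ((m : ℝ) + 1)⁻¹) • x - c • (fun _ => (1 : ℝ)) := by
  set B := A.map (Complex.ofReal : ℝ → ℂ) with hB
  set ρ := specRad A with hρdef
  set t : ℝ := ρ + ((m : ℝ) + 1)⁻¹ with htdef
  have hminv : (0 : ℝ) < ((m : ℝ) + 1)⁻¹ := by positivity
  have htρ : ρ < t := by simp [htdef]; linarith
  have ht0 : 0 < t := lt_of_le_of_lt hρ0 htρ
  have hsum := pf_summable A hub hρ0 htρ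
  obtain ⟨P, hPnn, hPid, hPbd⟩ := pf_real_resolvent A hA ht0 hsum
  -- choose z on the circle of radius t passing near μ₀
  obtain ⟨z, habsz, hdist⟩ : ∃ z : ℂ, ‖z‖ = t ∧ ‖z - μ₀‖ = t - ρ := by
    rcases eq_or_lt_of_le hρ0 with hρz | hρpos
    · refine ⟨(t : ℂ), by rw [Complex.norm_real, Real.norm_eq_abs, abs_of_pos ht0], ?_⟩
      have hμz : μ₀ = 0 := by
        have : ‖μ₀‖ = 0 := by rw [habs0, ← hρz]
        exact norm_eq_zero.mp this
      rw [hμz, sub_zero, Complex.norm_real, Real.norm_eq_abs, abs_of_pos ht0, ← hρz, sub_zero]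
    · refine ⟨((t / ρ : ℝ) : ℂ) * μ₀, ?_, ?_⟩
      · rw [norm_mul, Complex.norm_real, Real.norm_eq_abs, habs0, abs_of_pos (by positivity),
          div_mul_cancel₀ _ (ne_of_gt hρpos)]
      · have h1 : ((t / ρ : ℝ) : ℂ) * μ₀ - μ₀ = (((t / ρ - 1 : ℝ)) : ℂ) * μ₀ := by
          push_cast; ring
        rw [h1, norm_mul, Complex.norm_real, Real.norm_eq_abs, habs0,
          abs_of_nonneg (by rw [sub_nonneg]; exact (one_le_div hρpos).mpr htρ.le),
          sub_mul, one_mul, div_mul_cancel₀ _ (ne_of_gt hρpos)]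
  obtain ⟨V, hV, hl, hr⟩ := pf_resolvent B ht0 habsz hsum
  have hlb : 1 ≤ (t - ρ) * ‖V‖ := by
    have := pf_norm_lb B V hl hr hμ₀nu
    rwa [hdist] at this
  set s : ℝ := ∑ i, ∑ j, P i j with hs
  have hub2 : ‖V‖ ≤ s := hPbd z habsz V hV
  have hslb : (m : ℝ) + 1 ≤ s := by
    have htmρ : t - ρ = ((m : ℝ) + 1)⁻¹ := by simp [htdef]
    have h2 : 1 ≤ (t - ρ) * s :=
      hlb.trans (mul_le_mul_of_nonneg_left hub2 (by linarith [htρ]))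
    rw [htmρ] at h2
    have hm1 : (0 : ℝ) < (m : ℝ) + 1 := by positivity
    calc (m : ℝ) + 1 = ((m : ℝ) + 1) * 1 := by ring
      _ ≤ ((m : ℝ) + 1) * (((m : ℝ) + 1)⁻¹ * s) := by
          exact mul_le_mul_of_nonneg_left h2 hm1.le
      _ = s := by field_simp
  have hs0 : 0 < s := lt_of_lt_of_le (by positivity) hslb
  set y : Fin n → ℝ := P.mulVec (fun _ => 1) with hy
  have hy0 : ∀ i, 0 ≤ y i := by
    intro i
    rw [hy, Matrix.mulVec, dotProduct]
    exact Finset.sum_nonneg fun j _ => by simpa using hPnn i j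
  have hysum : (∑ i, y i) = s := by
    rw [hy, hs]
    refine Finset.sum_congr rfl fun i _ => ?_
    rw [Matrix.mulVec, dotProduct]
    simp
  have hyeq : A.mulVec y = t • y - (fun _ => (1 : ℝ)) := by
    have h1 : (t • (1 : Matrix (Fin n) (Fin n) ℝ) - A).mulVec y = fun _ => (1 : ℝ) := by
      rw [hy, Matrix.mulVec_mulVec, hPid, Matrix.one_mulVec]
    rw [Matrix.sub_mulVec, Matrix.smul_mulVec, Matrix.one_mulVec] at h1
    funext i
    have := congrFun h1 i
    simp only [Pi.sub_apply] at this ⊢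
    linarith [this]
  refine ⟨s⁻¹ • y, fun i => mul_nonneg (by positivity) (hy0 i), ?_, s⁻¹,
    by positivity, ?_, ?_⟩
  · have : (∑ i, s⁻¹ * y i) = s⁻¹ * ∑ i, y i := by
      rw [Finset.mul_sum]
    simp only [Pi.smul_apply, smul_eq_mul]
    rw [this, hysum, inv_mul_cancel₀ (ne_of_gt hs0)]
  · rw [inv_le_inv₀ hs0 (by positivity : (0:ℝ) < (m : ℝ) + 1)]
    exact hslb
  · rw [Matrix.mulVec_smul, hyeq, smul_sub]
    rw [smul_comm s⁻¹ t y]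

theorem perron_frobenius_weak {n : ℕ} (hn : 1 ≤ n) (A : Matrix (Fin n) (Fin n) ℝ)
    (hA : ∀ i j, 0 ≤ A i j) :
    ∃ x : Fin n → ℝ, (∀ i, 0 ≤ x i) ∧ x ≠ 0 ∧ A.mulVec x = specRad A • x := by
  haveI : Nonempty (Fin n) := ⟨⟨0, hn⟩⟩
  set B := A.map (Complex.ofReal : ℝ → ℂ) with hB
  set ρ := specRad A with hρdef
  obtain ⟨⟨μ₀, hμ₀, habs0⟩, hub⟩ := pf_specRad_spec hn A
  have hρ0 : 0 ≤ ρ := by rw [hρdef, ← habs0]; exact norm_nonneg μ₀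
  have hμ₀nu : ¬ IsUnit (μ₀ • (1 : Matrix (Fin n) (Fin n) ℂ) - B) :=
    (pf_mem_roots_iff B μ₀).mp hμ₀
  -- the sequence of shifts
  set t : ℕ → ℝ := fun m => ρ + ((m : ℝ) + 1)⁻¹ with ht
  have htρ : ∀ m, ρ < t m := fun m => by
    have : (0 : ℝ) < ((m : ℝ) + 1)⁻¹ := by positivity
    simp [ht]; linarith
  have ht0 : ∀ m, 0 < t m := fun m => lt_of_le_of_lt hρ0 (htρ m)
  -- data for each m
  have key : ∀ m : ℕ, ∃ x : Fin n → ℝ, (∀ i, 0 ≤ x i) ∧ (∑ i, x i) = 1 ∧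
      ∃ c : ℝ, 0 ≤ c ∧ c ≤ ((m : ℝ) + 1)⁻¹ ∧
        A.mulVec x = t m • x - c • (fun _ => (1 : ℝ)) :=
    fun m => pf_key A hA hub hρ0 habs0 hμ₀nu m
  choose xs hxs0 hxs1 cs hcs0 hcsle hxseq using key
  -- compactness
  set K : Set (Fin n → ℝ) := {x | (∀ i, 0 ≤ x i) ∧ (∑ i, x i) = 1} with hK
  have hKclosed : IsClosed K := by
    have : K = (⋂ i, {x : Fin n → ℝ | 0 ≤ x i}) ∩ {x : Fin n → ℝ | (∑ i, x i) = 1} := by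
      ext x; simp [hK, Set.mem_iInter, forall_and]
    rw [this]
    exact IsClosed.inter
      (isClosed_iInter fun i => isClosed_le continuous_const (continuous_apply i))
      (isClosed_eq (continuous_finset_sum _ fun i _ => continuous_apply i) continuous_const)
  have hKbdd : Bornology.IsBounded K := by
    refine (Metric.isBounded_iff_subset_closedBall 0).mpr ⟨1, fun x hx => ?_⟩
    obtain ⟨hx0, hx1⟩ := hx
    rw [Metric.mem_closedBall, dist_zero_right]
    refine (pi_norm_le_iff_of_nonneg zero_le_one).mpr fun i => ?_
    rw [Real.norm_eq_abs, abs_of_nonneg (hx0 i)]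
    calc x i ≤ ∑ j, x j := Finset.single_le_sum (fun j _ => hx0 j) (Finset.mem_univ i)
      _ = 1 := hx1
  have hKcomp : IsCompact K := Metric.isCompact_of_isClosed_isBounded hKclosed hKbdd
  have hxsK : ∀ m, xs m ∈ K := fun m => ⟨hxs0 m, hxs1 m⟩
  obtain ⟨x, hxK, φ, hφ, hconv⟩ := hKcomp.tendsto_subseq hxsK
  -- pass to the limit
  have hti : Tendsto (fun m => t (φ m)) atTop (𝓝 ρ) := by
    have h1 : Tendsto t atTop (𝓝 ρ) := by
      have := tendsto_one_div_add_atTop_nhds_zero_nat (𝕜 := ℝ)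
      have h2 : Tendsto (fun m : ℕ => ρ + 1 / ((m : ℝ) + 1)) atTop (𝓝 (ρ + 0)) :=
        tendsto_const_nhds.add this
      simpa [ht, one_div] using h2
    exact h1.comp hφ.tendsto_atTop
  have hsi : Tendsto (fun m => ((φ m : ℝ) + 1)⁻¹) atTop (𝓝 0) := by
    have h1 : Tendsto (fun m : ℕ => ((m : ℝ) + 1)⁻¹) atTop (𝓝 0) := by
      simpa [one_div] using tendsto_one_div_add_atTop_nhds_zero_nat (𝕜 := ℝ)
    exact h1.comp hφ.tendsto_atTop
  have hxi : ∀ j, Tendsto (fun m => xs (φ m) j) atTop (𝓝 (x j)) := by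
    intro j
    exact (tendsto_pi_nhds.mp hconv) j
  have hcsφ : Tendsto (fun m => cs (φ m)) atTop (𝓝 0) :=
    squeeze_zero (fun m => hcs0 (φ m)) (fun m => hcsle (φ m)) hsi
  have heq : ∀ i, A.mulVec x i = ρ * x i := by
    intro i
    have hL : Tendsto (fun m => A.mulVec (xs (φ m)) i) atTop (𝓝 (A.mulVec x i)) := by
      simp only [Matrix.mulVec, dotProduct]
      exact tendsto_finset_sum _ fun j _ => (hxi j).const_mul (A i j)
    have hR : Tendsto (fun m => t (φ m) * xs (φ m) i - cs (φ m))
        atTop (𝓝 (ρ * x i - 0)) := (hti.mul (hxi i)).sub hcsφ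
    have hsame : (fun m => A.mulVec (xs (φ m)) i)
        = fun m => t (φ m) * xs (φ m) i - cs (φ m) := by
      funext m
      have := congrFun (hxseq (φ m)) i
      simpa [Pi.smul_apply, smul_eq_mul] using this
    rw [hsame] at hL
    have := tendsto_nhds_unique hL hR
    rw [this]; ring
  refine ⟨x, hxK.1, ?_, ?_⟩
  · intro hx0
    have : (∑ i, x i) = 0 := by rw [hx0]; simp
    rw [hxK.2] at this
    norm_num at this
  · funext i
    rw [heq i, Pi.smul_apply, smul_eq_mul]

end PFAux
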